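/- Let (G,[·,·],α) be a multiplicative Hom-Lie superalgebra, let k ≥ −1 be an integer, and let a ∈ G be a homogeneous element with α(a) = a. Then the map ad_k(a) : G → G defined by ad_k(a)(x) = [a, α^k(x)] is an α^{k+1}-derivation of G of parity |a|, i.e. α∘ad_k(a) = ad_k(a)∘α and ad_k(a)([x,y]) = [ad_k(a)(x), α^{k+1}(y)] + (−1)^{|x||a|}[α^{k+1}(x), ad_k(a)(y)] for all homogeneous x,y ∈ G. -/

import Mathlib

/-- A Hom-Lie superalgebra structure. -/
def IsHomLieSuper {K G : Type*} [Field K] [AddCommGroup G] [Module K G]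
    (Gr : ZMod 2 → Submodule K G) (br : G → G → G) (α : G → G) : Prop :=
  IsLinearMap K α ∧
  (∀ x : G, IsLinearMap K (br x)) ∧
  (∀ y : G, IsLinearMap K fun x => br x y) ∧
  (∀ i j : ZMod 2, ∀ x ∈ Gr i, ∀ y ∈ Gr j, br x y ∈ Gr (i + j)) ∧
  (∀ i : ZMod 2, ∀ x ∈ Gr i, α x ∈ Gr i) ∧
  (∀ i j : ZMod 2, ∀ x ∈ Gr i, ∀ y ∈ Gr j,
      br x y = (-((-1 : K) ^ (i.val * j.val))) • br y x) ∧
  (∀ i j l : ZMod 2, ∀ x ∈ Gr i, ∀ y ∈ Gr j, ∀ z ∈ Gr l,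
      ((-1 : K) ^ (i.val * l.val)) • br (α x) (br y z) +
      ((-1 : K) ^ (l.val * j.val)) • br (α z) (br x y) +
      ((-1 : K) ^ (j.val * i.val)) • br (α y) (br z x) = 0)

/-- The `k`-th power of `α` for `k : ℤ`, with the conventions `α^(-1) = 0` (indeed
`α^k = 0` for all negative `k`) and `α^0 = id`. -/
def itZ {G : Type*} [Zero G] (α : G → G) (k : ℤ) : G → G :=
  if k < 0 then (fun _ => 0) else α^[k.toNat]

theorem neg_one_pow_val_add (K : Type*) [Field K] (u v : ZMod 2) :
    (-1:K)^((u+v).val) = (-1:K)^(u.val) * (-1)^(v.val) := by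
  fin_cases u <;> fin_cases v <;>
    norm_num [show ZMod.val (n := 2) (0 : Fin 2) = 0 from rfl, show ZMod.val (n := 2) (1 : Fin 2) = 1 from rfl,
      show ∀ a b : Fin 2, ZMod.val (n := 2) ((show ZMod 2 from a) + (show ZMod 2 from b)) = ((a:ℕ) + b) % 2 from fun a b => rfl, show ((2:ZMod 2)).val = 0 from rfl, show ((1:ZMod 2)).val = 1 from rfl,
      show ((0:ZMod 2)).val = 0 from rfl]

theorem zval : ((2:ZMod 2)).val = 0 ∧ ((1:ZMod 2)).val = 1 ∧ ((0:ZMod 2)).val = 0 :=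
  ⟨rfl, rfl, rfl⟩

/-- In a multiplicative Hom-Lie superalgebra, for a homogeneous `a` of parity
`p` with `α a = a`, the map `ad_k(a) : x ↦ [a, α^k x]` commutes with `α`, is homogeneous of
parity `p`, and is an `α^(k+1)`-derivation. -/
theorem ad_isAlphaDerivation
    (K G : Type*) [Field K] [CharZero K] [AddCommGroup G] [Module K G]
    (Gr : ZMod 2 → Submodule K G) (hGr : DirectSum.IsInternal Gr)
    (br : G → G → G) (α : G → G) (hHL : IsHomLieSuper Gr br α)
    (hmult : ∀ x y : G, α (br x y) = br (α x) (α y))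
    (k : ℤ) (hk : -1 ≤ k)
    (p : ZMod 2) (a : G) (ha : a ∈ Gr p) (hαa : α a = a) :
    (∀ x : G, α (br a (itZ α k x)) = br a (itZ α k (α x))) ∧
    (∀ i : ZMod 2, ∀ x ∈ Gr i, br a (itZ α k x) ∈ Gr (i + p)) ∧
    (∀ (i j : ZMod 2), ∀ x ∈ Gr i, ∀ y ∈ Gr j,
        br a (itZ α k (br x y)) =
          br (br a (itZ α k x)) (itZ α (k + 1) y) +
            ((-1 : K) ^ (i.val * p.val)) • br (itZ α (k + 1) x) (br a (itZ α k y))) := by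
  obtain ⟨hα, hbrR, hbrL, hgr, hαgr, hskew, hjac⟩ := hHL
  have hbr0r : ∀ x : G, br x (0:G) = 0 := fun x => (hbrR x).map_zero
  have hbr0l : ∀ y : G, br (0:G) y = 0 := fun y => (hbrL y).map_zero
  by_cases hneg : k < 0
  · have h0 : ∀ x : G, itZ α k x = 0 := by intro x; simp [itZ, hneg]
    refine ⟨?_, ?_, ?_⟩
    · intro x; simp [h0, hbr0r, hα.map_zero]
    · intro i x hx; simp [h0, hbr0r]
    · intro i j x hx y hy
      simp [h0, hbr0r, hbr0l, smul_zero]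
  · push_neg at hneg
    set n := k.toNat with hn
    have hit : itZ α k = α^[n] := by simp [itZ, not_lt.mpr hneg]; rfl
    have hit1 : itZ α (k+1) = α^[n+1] := by
      simp only [itZ, if_neg (show ¬ (k+1 < 0) by omega)]
      rw [show (k+1).toNat = n+1 by omega]
    have hmul_it : ∀ (m : ℕ) (x y : G), α^[m] (br x y) = br (α^[m] x) (α^[m] y) := by
      intro m
      induction m with
      | zero => intro x y; simp
      | succ m ih =>
          intro x y
          simp only [Function.iterate_succ_apply']
          rw [ih, hmult]
    have hgr_it : ∀ (m : ℕ) (i : ZMod 2) (x : G), x ∈ Gr i → α^[m] x ∈ Gr i := by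
      intro m
      induction m with
      | zero => intro i x hx; simpa using hx
      | succ m ih =>
          intro i x hx
          rw [Function.iterate_succ_apply']
          exact hαgr i _ (ih i x hx)
    refine ⟨?_, ?_, ?_⟩
    · intro x
      have e : α (α^[n] x) = α^[n] (α x) :=
        (Function.iterate_succ_apply' α n x).symm.trans (Function.iterate_succ_apply α n x)
      rw [hit, hmult, hαa, e]
    · intro i x hx
      rw [hit, add_comm]
      exact hgr p i a ha _ (hgr_it n i x hx)
    · intro i j x hx y hy
      rw [hit, hit1, hmul_it]
      set X := α^[n] x with hXdef
      set Y := α^[n] y with hYdef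
      have hX : X ∈ Gr i := hgr_it n i x hx
      have hY : Y ∈ Gr j := hgr_it n j y hy
      have haX : br a X ∈ Gr (p+i) := hgr p i a ha X hX
      have hαXY : α^[n+1] y = α Y := Function.iterate_succ_apply' α n y
      have hαXX : α^[n+1] x = α X := Function.iterate_succ_apply' α n x
      rw [hαXX, hαXY]
      have J := hjac p i j a ha X hX Y hY
      rw [hαa] at J
      rw [hskew j (p+i) (α Y) (hαgr j Y hY) (br a X) haX,
          hskew j p Y hY a ha, (hbrR (α X)).map_smul] at J
      fin_cases p <;> fin_cases i <;> fin_cases j <;>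
        (norm_num [show ZMod.val (n := 2) (0 : Fin 2) = 0 from rfl, show ZMod.val (n := 2) (1 : Fin 2) = 1 from rfl,
          show ∀ a b : Fin 2, ZMod.val (n := 2) ((show ZMod 2 from a) + (show ZMod 2 from b)) = ((a:ℕ) + b) % 2 from fun a b => rfl, zval.1, zval.2.1, zval.2.2] at J ⊢) <;>
        first
          | linear_combination (norm := module) J
          | linear_combination (norm := module) (-1 : K) • J
          | linear_combination (norm := module) -J
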